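/- For every s ≥ 0, ||Q_{2^s}||² = ∫ (Q_{2^s})² dμ = (1 − 2γ_{s+1})·r_s²/4; equivalently, Q_{2^{s+1}} = (Q_{2^s})² − ||Q_{2^s}||². -/

import Mathlib

open Polynomial MeasureTheory Filter

/-- `r γ s` : the recursively defined scales `r 0 = 1`, `r (s+1) = γ (s+1) * (r s)²`. -/
noncomputable def r (γ : ℕ → ℝ) : ℕ → ℝ
  | 0 => 1
  | s + 1 => γ (s + 1) * (r γ s) ^ 2

/-- `P γ s` : the polynomial `P_{2^s}`, with `P_1 = X - 1` and
`P_{2^{s+1}} = P_{2^s} · (P_{2^s} + r_s)`. -/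
noncomputable def P (γ : ℕ → ℝ) : ℕ → Polynomial ℝ
  | 0 => X - 1
  | s + 1 => P γ s * (P γ s + C (r γ s))

/-- The integral `∫ f dν_s` of a function `f` against the normalized counting measure `ν_s`
on the `2^s` (simple, real) zeros of `P_{2^s} + r_s/2`. -/
noncomputable def nuInt (γ : ℕ → ℝ) (s : ℕ) (f : ℝ → ℝ) : ℝ :=
  (((P γ s + C (r γ s / 2)).roots.map f).sum) / 2 ^ s

/-! ### Auxiliary lemmas -/

lemma r_pos (γ : ℕ → ℝ) (hγ : ∀ s : ℕ, 0 < γ (s + 1) ∧ γ (s + 1) < 1 / 4) :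
    ∀ s, 0 < r γ s
  | 0 => one_pos
  | (s + 1) => by
      have h1 := r_pos γ hγ s
      have h2 := (hγ s).1
      show 0 < γ (s + 1) * (r γ s) ^ 2
      positivity

lemma r_succ_le (γ : ℕ → ℝ) (hγ : ∀ s : ℕ, 0 < γ (s + 1) ∧ γ (s + 1) < 1 / 4) (s : ℕ) :
    r γ (s + 1) ≤ (r γ s) ^ 2 / 4 := by
  have h2 := (hγ s).2
  have h3 := sq_nonneg (r γ s)
  show γ (s + 1) * (r γ s) ^ 2 ≤ (r γ s) ^ 2 / 4
  nlinarith

lemma P_monic (γ : ℕ → ℝ) : ∀ s, (P γ s).Monic ∧ (P γ s).natDegree = 2 ^ s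
  | 0 => by
      constructor
      · show (X - 1 : Polynomial ℝ).Monic
        simpa using monic_X_sub_C (1 : ℝ)
      · show (X - 1 : Polynomial ℝ).natDegree = 1
        simpa using natDegree_X_sub_C (1 : ℝ)
  | (s + 1) => by
      obtain ⟨hm, hd⟩ := P_monic γ s
      have hpos : 0 < (P γ s).natDegree := by rw [hd]; positivity
      have hm' : (P γ s + C (r γ s)).Monic :=
        hm.add_of_left (lt_of_le_of_lt degree_C_le (natDegree_pos_iff_degree_pos.mp hpos))
      constructor
      · exact hm.mul hm'
      · show (P γ s * (P γ s + C (r γ s))).natDegree = 2 ^ (s + 1)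
        rw [hm.natDegree_mul hm', hd, natDegree_add_C, hd]
        ring

lemma P_degree (γ : ℕ → ℝ) (s : ℕ) : (P γ s).degree = ((2 ^ s : ℕ) : WithBot ℕ) := by
  rw [degree_eq_natDegree (P_monic γ s).1.ne_zero, (P_monic γ s).2]

lemma degree_lt_P (γ : ℕ → ℝ) (s : ℕ) {c : Polynomial ℝ} (h : c.natDegree < 2 ^ s) :
    c.degree < (P γ s).degree := by
  refine lt_of_le_of_lt degree_le_natDegree ?_
  rw [P_degree γ s]
  exact_mod_cast h

/-- The condition on `y` under which `P γ s + C y` splits with real roots. -/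
def Cond (γ : ℕ → ℝ) : ℕ → ℝ → Prop
  | 0, _ => True
  | (s + 1), y => 0 < y ∧ y ≤ (r γ s) ^ 2 / 4

lemma cond_of (γ : ℕ → ℝ) (hγ : ∀ s : ℕ, 0 < γ (s + 1) ∧ γ (s + 1) < 1 / 4)
    (s : ℕ) {y : ℝ} (h0 : 0 < y) (hle : y ≤ r γ s) : Cond γ s y := by
  cases s with
  | zero => trivial
  | succ t => exact ⟨h0, hle.trans (r_succ_le γ hγ t)⟩

/-- The value of `∑_{roots of P_s + y} c` (independent of `y`). -/
noncomputable def Sig (γ : ℕ → ℝ) : ℕ → Polynomial ℝ → ℝ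
  | 0, c => c.coeff 0
  | (s + 1), c => 2 * Sig γ s (c %ₘ P γ s) - r γ s * Sig γ s (c /ₘ P γ s)

lemma Sig_zero (γ : ℕ → ℝ) : ∀ s, Sig γ s 0 = 0
  | 0 => by simp [Sig]
  | (s + 1) => by
      show 2 * Sig γ s (0 %ₘ P γ s) - r γ s * Sig γ s (0 /ₘ P γ s) = 0
      rw [zero_modByMonic, zero_divByMonic, Sig_zero γ s]
      ring

lemma Sig_stable (γ : ℕ → ℝ) (s : ℕ) {c : Polynomial ℝ} (h : c.natDegree < 2 ^ s) :
    Sig γ (s + 1) c = 2 * Sig γ s c := by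
  have hm := (P_monic γ s).1
  have hdm := div_modByMonic_unique (f := c) (g := P γ s) 0 c hm
    ⟨by simp, degree_lt_P γ s h⟩
  show 2 * Sig γ s (c %ₘ P γ s) - r γ s * Sig γ s (c /ₘ P γ s) = 2 * Sig γ s c
  rw [hdm.1, hdm.2, Sig_zero γ s]
  ring

lemma Sig_C (γ : ℕ → ℝ) : ∀ s, ∀ k : ℝ, Sig γ s (C k) = 2 ^ s * k
  | 0, k => by simp [Sig]
  | (s + 1), k => by
      have h : (C k : Polynomial ℝ).natDegree < 2 ^ s := by
        simp [natDegree_C]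
      rw [Sig_stable γ s h, Sig_C γ s k]
      ring

lemma Sig_C_mul (γ : ℕ → ℝ) : ∀ s, ∀ k : ℝ, ∀ c : Polynomial ℝ,
    Sig γ s (C k * c) = k * Sig γ s c
  | 0, k, c => by simp [Sig, coeff_C_mul]
  | (s + 1), k, c => by
      have hm := (P_monic γ s).1
      have hdm := div_modByMonic_unique (f := C k * c) (g := P γ s)
        (C k * (c /ₘ P γ s)) (C k * (c %ₘ P γ s)) hm
        ⟨by
          have h0 := modByMonic_add_div c (P γ s)
          calc C k * (c %ₘ P γ s) + P γ s * (C k * (c /ₘ P γ s))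
              = C k * (c %ₘ P γ s + P γ s * (c /ₘ P γ s)) := by ring
            _ = C k * c := by rw [h0],
          by
            have h1 : (C k * (c %ₘ P γ s)).degree ≤ (c %ₘ P γ s).degree := by
              simpa [smul_eq_C_mul] using degree_smul_le k (c %ₘ P γ s)
            exact lt_of_le_of_lt h1 (degree_modByMonic_lt c hm)⟩
      show 2 * Sig γ s (C k * c %ₘ P γ s) - r γ s * Sig γ s (C k * c /ₘ P γ s)
          = k * (2 * Sig γ s (c %ₘ P γ s) - r γ s * Sig γ s (c /ₘ P γ s))
      rw [hdm.1, hdm.2, Sig_C_mul γ s k (c %ₘ P γ s), Sig_C_mul γ s k (c /ₘ P γ s)]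
      ring

/-- Key lemma: the sum of `c` over the roots of `P γ s + C y` equals `Sig γ s c`
for any admissible `y`. -/
lemma sum_roots_eq (γ : ℕ → ℝ) (hγ : ∀ s : ℕ, 0 < γ (s + 1) ∧ γ (s + 1) < 1 / 4) :
    ∀ s : ℕ, ∀ y : ℝ, Cond γ s y → ∀ c : Polynomial ℝ, c.natDegree < 2 ^ s →
      (((P γ s + C y).roots.map (fun x => c.eval x)).sum) = Sig γ s c
  | 0, y, _, c, hc => by
      have hc' : c = C (c.coeff 0) := eq_C_of_natDegree_le_zero (by omega)
      have hP : P γ 0 + C y = X - C (1 - y) := by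
        show (X - 1 : Polynomial ℝ) + C y = X - C (1 - y)
        rw [C_sub, C_1]
        ring
      rw [hP, roots_X_sub_C, Multiset.map_singleton, Multiset.sum_singleton, hc']
      simp [Sig]
  | (s + 1), y, hy, c, hc => by
      obtain ⟨hy0, hy4⟩ := hy
      have hr : 0 < r γ s := r_pos γ hγ s
      have hDnn : 0 ≤ (r γ s) ^ 2 - 4 * y := by linarith
      set D := Real.sqrt ((r γ s) ^ 2 - 4 * y) with hDdef
      have hD0 : 0 ≤ D := Real.sqrt_nonneg _
      have hD2 : D ^ 2 = (r γ s) ^ 2 - 4 * y := Real.sq_sqrt hDnn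
      have hDlt : D < r γ s := by nlinarith
      set y₁ := (r γ s - D) / 2 with hy₁def
      set y₂ := (r γ s + D) / 2 with hy₂def
      have h1 : y₁ + y₂ = r γ s := by rw [hy₁def, hy₂def]; ring
      have h2 : y₁ * y₂ = y := by
        have : y₁ * y₂ = ((r γ s) ^ 2 - D ^ 2) / 4 := by rw [hy₁def, hy₂def]; ring
        rw [this, hD2]; ring
      have hy₁pos : 0 < y₁ := by rw [hy₁def]; linarith
      have hy₂pos : 0 < y₂ := by rw [hy₂def]; linarith
      have hy₁le : y₁ ≤ r γ s := by rw [hy₁def]; linarith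
      have hy₂le : y₂ ≤ r γ s := by rw [hy₂def]; linarith
      have hcond₁ : Cond γ s y₁ := cond_of γ hγ s hy₁pos hy₁le
      have hcond₂ : Cond γ s y₂ := cond_of γ hγ s hy₂pos hy₂le
      have hm := (P_monic γ s).1
      have hd := (P_monic γ s).2
      -- factorization
      have hfac : P γ (s + 1) + C y = (P γ s + C y₁) * (P γ s + C y₂) := by
        show P γ s * (P γ s + C (r γ s)) + C y = _
        rw [← h1, ← h2, C_add, C_mul]
        ring
      have hpos : 0 < (P γ s).natDegree := by rw [hd]; positivity
      have hne : ∀ z : ℝ, P γ s + C z ≠ 0 := fun z =>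
        (hm.add_of_left (lt_of_le_of_lt degree_C_le
          (natDegree_pos_iff_degree_pos.mp hpos))).ne_zero
      -- degree bounds for the mod and div
      have hmod : (c %ₘ P γ s).natDegree < 2 ^ s := by
        by_cases h0 : c %ₘ P γ s = 0
        · rw [h0]; simp
        · rw [natDegree_lt_iff_degree_lt h0]
          have := degree_modByMonic_lt c hm
          rw [P_degree γ s] at this
          exact_mod_cast this
      have hdiv : (c /ₘ P γ s).natDegree < 2 ^ s := by
        rw [natDegree_divByMonic c hm, hd]
        have : (2 : ℕ) ^ (s + 1) = 2 ^ s + 2 ^ s := by ring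
        omega
      -- sum over the roots of one factor
      have hfactor : ∀ z : ℝ, Cond γ s z →
          (((P γ s + C z).roots.map (fun x => c.eval x)).sum)
            = Sig γ s (c %ₘ P γ s) - z * Sig γ s (c /ₘ P γ s) := by
        intro z hz
        have hkey : ∀ x ∈ (P γ s + C z).roots,
            c.eval x = (c %ₘ P γ s).eval x + (-z) * (c /ₘ P γ s).eval x := by
          intro x hx
          have hx0 : (P γ s + C z).eval x = 0 := (mem_roots (hne z)).1 hx
          have hP : (P γ s).eval x = -z := by
            have : (P γ s).eval x + z = 0 := by simpa using hx0
            linarith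
          conv_lhs => rw [← modByMonic_add_div c (P γ s)]
          simp only [eval_add, eval_mul, hP]
        rw [Multiset.map_congr rfl hkey]
        have : ((P γ s + C z).roots.map
            (fun x => (c %ₘ P γ s).eval x + (-z) * (c /ₘ P γ s).eval x)).sum
            = ((P γ s + C z).roots.map (fun x => (c %ₘ P γ s).eval x)).sum
              + ((P γ s + C z).roots.map (fun x => (-z) * (c /ₘ P γ s).eval x)).sum := by
          rw [← Multiset.sum_map_add]
        rw [this, Multiset.sum_map_mul_left,
          sum_roots_eq γ hγ s z hz (c %ₘ P γ s) hmod,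
          sum_roots_eq γ hγ s z hz (c /ₘ P γ s) hdiv]
        ring
      rw [hfac, roots_mul (mul_ne_zero (hne y₁) (hne y₂)), Multiset.map_add,
        Multiset.sum_add, hfactor y₁ hcond₁, hfactor y₂ hcond₂]
      show _ = 2 * Sig γ s (c %ₘ P γ s) - r γ s * Sig γ s (c /ₘ P γ s)
      rw [← h1]
      ring

lemma nuInt_eq (γ : ℕ → ℝ) (hγ : ∀ s : ℕ, 0 < γ (s + 1) ∧ γ (s + 1) < 1 / 4)
    (t : ℕ) {c : Polynomial ℝ} (h : c.natDegree < 2 ^ t) :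
    nuInt γ t (fun x => c.eval x) = Sig γ t c / 2 ^ t := by
  have hr : 0 < r γ t := r_pos γ hγ t
  have hcond : Cond γ t (r γ t / 2) := cond_of γ hγ t (by linarith) (by linarith)
  unfold nuInt
  rw [sum_roots_eq γ hγ t (r γ t / 2) hcond c h]

lemma sq_T (γ : ℕ → ℝ) (s : ℕ) :
    (P γ s + C (r γ s / 2)) ^ 2 = P γ (s + 1) + C ((r γ s) ^ 2 / 4) := by
  have h1 : ((r γ s) ^ 2 / 4 : ℝ) = (r γ s / 2) * (r γ s / 2) := by ring
  have h2 : (r γ s : ℝ) = r γ s / 2 + r γ s / 2 := by ring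
  show _ = P γ s * (P γ s + C (r γ s)) + C ((r γ s) ^ 2 / 4)
  rw [h1, C_mul]
  nth_rewrite 2 [h2]
  rw [C_add]
  ring

theorem stmt_6 (γ : ℕ → ℝ) (hγ : ∀ s : ℕ, 0 < γ (s + 1) ∧ γ (s + 1) < 1 / 4)
    (μ : Measure ℝ) [IsProbabilityMeasure μ]
    (hμint : ∀ p : Polynomial ℝ, Integrable (fun x => p.eval x) μ)
    (hμpos : ∀ p : Polynomial ℝ, p ≠ 0 → 0 < ∫ x, (p.eval x) ^ 2 ∂μ)
    (hμconv : ∀ p : Polynomial ℝ,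
      Tendsto (fun s => nuInt γ s (fun x => p.eval x)) atTop (nhds (∫ x, p.eval x ∂μ)))
    (Q : ℕ → Polynomial ℝ) (hQmonic : ∀ n, (Q n).Monic) (hQdeg : ∀ n, (Q n).natDegree = n)
    (hQorth : ∀ n : ℕ, ∀ p : Polynomial ℝ, p.degree < (n : WithBot ℕ) →
      ∫ x, (Q n).eval x * p.eval x ∂μ = 0)
    (s : ℕ) :
    ∫ x, ((Q (2 ^ s)).eval x) ^ 2 ∂μ = (1 - 2 * γ (s + 1)) * (r γ s) ^ 2 / 4 ∧
    Q (2 ^ (s + 1)) = (Q (2 ^ s)) ^ 2 - C (∫ x, ((Q (2 ^ s)).eval x) ^ 2 ∂μ) := by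
  -- integrals of polynomials against μ are computed by Sig
  have hINT : ∀ (t : ℕ) (c : Polynomial ℝ), c.natDegree < 2 ^ t →
      ∫ x, c.eval x ∂μ = Sig γ t c / 2 ^ t := by
    intro t c hc
    have hstab : ∀ u, t ≤ u → Sig γ u c / 2 ^ u = Sig γ t c / 2 ^ t := by
      intro u hu
      induction u, hu using Nat.le_induction with
      | base => rfl
      | succ u hu ih =>
          have hcu : c.natDegree < 2 ^ u :=
            lt_of_lt_of_le hc (Nat.pow_le_pow_right (by norm_num) hu)
          rw [Sig_stable γ u hcu, ← ih]
          field_simp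
          ring
    have hconst : ∀ u, t ≤ u → nuInt γ u (fun x => c.eval x) = Sig γ t c / 2 ^ t := by
      intro u hu
      have hcu : c.natDegree < 2 ^ u :=
        lt_of_lt_of_le hc (Nat.pow_le_pow_right (by norm_num) hu)
      rw [nuInt_eq γ hγ u hcu, hstab u hu]
    have h2 : Tendsto (fun u => nuInt γ u (fun x => c.eval x)) atTop
        (nhds (Sig γ t c / 2 ^ t)) := by
      refine Tendsto.congr' ?_ tendsto_const_nhds
      filter_upwards [eventually_ge_atTop t] with u hu
      exact (hconst u hu).symm
    exact tendsto_nhds_unique (hμconv c) h2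
  -- orthogonality of T_s := P γ s + C (r γ s / 2)
  have hORTH : ∀ (t : ℕ) (p : Polynomial ℝ), p.natDegree < 2 ^ t →
      ∫ x, ((P γ t + C (r γ t / 2)) * p).eval x ∂μ = 0 := by
    intro t p hp
    have hm := (P_monic γ t).1
    have hdeg : ((P γ t + C (r γ t / 2)) * p).natDegree < 2 ^ (t + 1) := by
      have h1 : ((P γ t + C (r γ t / 2)) * p).natDegree
          ≤ (P γ t + C (r γ t / 2)).natDegree + p.natDegree := natDegree_mul_le
      have h2 : (P γ t + C (r γ t / 2)).natDegree = 2 ^ t := by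
        rw [natDegree_add_C, (P_monic γ t).2]
      have h3 : (2 : ℕ) ^ (t + 1) = 2 ^ t + 2 ^ t := by ring
      omega
    rw [hINT (t + 1) _ hdeg]
    have hdm := div_modByMonic_unique (f := (P γ t + C (r γ t / 2)) * p) (g := P γ t)
      p (C (r γ t / 2) * p) hm
      ⟨by ring, by
        have h1 : (C (r γ t / 2) * p).degree ≤ p.degree := by
          simpa [smul_eq_C_mul] using degree_smul_le (r γ t / 2) p
        exact lt_of_le_of_lt h1 (degree_lt_P γ t hp)⟩
    have : Sig γ (t + 1) ((P γ t + C (r γ t / 2)) * p) = 0 := by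
      show 2 * Sig γ t (((P γ t + C (r γ t / 2)) * p) %ₘ P γ t)
          - r γ t * Sig γ t (((P γ t + C (r γ t / 2)) * p) /ₘ P γ t) = 0
      rw [hdm.1, hdm.2, Sig_C_mul γ t]
      ring
    rw [this]
    simp
  -- the squared norm of T_s
  have hNORM : ∀ t : ℕ,
      ∫ x, ((P γ t + C (r γ t / 2)).eval x) ^ 2 ∂μ
        = (1 - 2 * γ (t + 1)) * (r γ t) ^ 2 / 4 := by
    intro t
    have hm := (P_monic γ (t + 1)).1
    have heq : (fun x => ((P γ t + C (r γ t / 2)).eval x) ^ 2)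
        = fun x => ((P γ (t + 1) + C ((r γ t) ^ 2 / 4)).eval x) := by
      funext x
      rw [← sq_T γ t]
      simp
    rw [heq]
    have hdeg : (P γ (t + 1) + C ((r γ t) ^ 2 / 4)).natDegree < 2 ^ (t + 2) := by
      rw [natDegree_add_C, (P_monic γ (t + 1)).2]
      have : (2 : ℕ) ^ (t + 2) = 2 ^ (t + 1) + 2 ^ (t + 1) := by ring
      have : 0 < (2 : ℕ) ^ (t + 1) := by positivity
      omega
    rw [hINT (t + 2) _ hdeg]
    have hdm := div_modByMonic_unique (f := P γ (t + 1) + C ((r γ t) ^ 2 / 4))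
      (g := P γ (t + 1)) 1 (C ((r γ t) ^ 2 / 4)) hm
      ⟨by ring, by
        exact lt_of_le_of_lt degree_C_le
          (natDegree_pos_iff_degree_pos.mp (by rw [(P_monic γ (t + 1)).2]; positivity))⟩
    have hSig : Sig γ (t + 2) (P γ (t + 1) + C ((r γ t) ^ 2 / 4))
        = 2 ^ (t + 1) * ((r γ t) ^ 2 / 2 - r γ (t + 1)) := by
      show 2 * Sig γ (t + 1) ((P γ (t + 1) + C ((r γ t) ^ 2 / 4)) %ₘ P γ (t + 1))
          - r γ (t + 1) * Sig γ (t + 1) ((P γ (t + 1) + C ((r γ t) ^ 2 / 4)) /ₘ P γ (t + 1))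
          = _
      rw [hdm.1, hdm.2, Sig_C γ (t + 1), show (1 : Polynomial ℝ) = C 1 from C_1.symm,
        Sig_C γ (t + 1)]
      ring
    rw [hSig]
    have hrt : r γ (t + 1) = γ (t + 1) * (r γ t) ^ 2 := rfl
    rw [hrt]
    have h2 : (2 : ℝ) ^ (t + 2) = 2 * 2 ^ (t + 1) := by ring
    have hne : (2 : ℝ) ^ (t + 1) ≠ 0 := by positivity
    field_simp
    ring
  -- uniqueness: Q (2^t) = P γ t + C (r γ t / 2)
  have hQT : ∀ t : ℕ, Q (2 ^ t) = P γ t + C (r γ t / 2) := by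
    intro t
    set T : Polynomial ℝ := P γ t + C (r γ t / 2) with hTdef
    have hTm : T.Monic := by
      have hpos : 0 < (P γ t).natDegree := by rw [(P_monic γ t).2]; positivity
      exact (P_monic γ t).1.add_of_left
        (lt_of_le_of_lt degree_C_le (natDegree_pos_iff_degree_pos.mp hpos))
    have hTdeg : T.natDegree = 2 ^ t := by
      rw [hTdef, natDegree_add_C, (P_monic γ t).2]
    set Dp : Polynomial ℝ := Q (2 ^ t) - T with hDdef
    by_cases hD0 : Dp = 0
    · have := sub_eq_zero.mp hD0
      exact this
    · exfalso
      have hdegQT : (Q (2 ^ t)).degree = T.degree := by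
        rw [degree_eq_natDegree (hQmonic (2 ^ t)).ne_zero, degree_eq_natDegree hTm.ne_zero,
          hQdeg (2 ^ t), hTdeg]
      have hDdeg : Dp.degree < ((2 ^ t : ℕ) : WithBot ℕ) := by
        have := degree_sub_lt hdegQT (hQmonic (2 ^ t)).ne_zero
          (by rw [(hQmonic (2 ^ t)).leadingCoeff, hTm.leadingCoeff])
        rwa [degree_eq_natDegree (hQmonic (2 ^ t)).ne_zero, hQdeg (2 ^ t)] at this
      have hDnat : Dp.natDegree < 2 ^ t := by
        rwa [natDegree_lt_iff_degree_lt hD0]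
      have h₁ : ∫ x, (Q (2 ^ t)).eval x * Dp.eval x ∂μ = 0 := hQorth (2 ^ t) Dp hDdeg
      have h₂ : ∫ x, (T * Dp).eval x ∂μ = 0 := hORTH t Dp hDnat
      have hint1 : Integrable (fun x => (Q (2 ^ t)).eval x * Dp.eval x) μ := by
        simpa [eval_mul] using hμint (Q (2 ^ t) * Dp)
      have hint2 : Integrable (fun x => T.eval x * Dp.eval x) μ := by
        simpa [eval_mul] using hμint (T * Dp)
      have h₃ : ∫ x, (Dp.eval x) ^ 2 ∂μ = 0 := by
        have hfun : (fun x => (Dp.eval x) ^ 2)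
            = fun x => (Q (2 ^ t)).eval x * Dp.eval x - T.eval x * Dp.eval x := by
          funext x
          rw [hDdef]
          simp [eval_sub]
          ring
        rw [hfun, integral_sub hint1 hint2, h₁]
        have : ∫ x, T.eval x * Dp.eval x ∂μ = ∫ x, (T * Dp).eval x ∂μ := by
          simp [eval_mul]
        rw [this, h₂]
        ring
      have := hμpos Dp hD0
      rw [h₃] at this
      exact lt_irrefl 0 this
  -- assemble
  have hfirst : ∫ x, ((Q (2 ^ s)).eval x) ^ 2 ∂μ = (1 - 2 * γ (s + 1)) * (r γ s) ^ 2 / 4 := by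
    rw [hQT s]
    exact hNORM s
  refine ⟨hfirst, ?_⟩
  rw [hfirst, hQT (s + 1), hQT s, sq_T γ s]
  have hc : ((r γ s) ^ 2 / 4 : ℝ) - (1 - 2 * γ (s + 1)) * (r γ s) ^ 2 / 4 = r γ (s + 1) / 2 := by
    have hrt : r γ (s + 1) = γ (s + 1) * (r γ s) ^ 2 := rfl
    rw [hrt]
    ring
  rw [← hc, C_sub]
  ring
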